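/- Let F be a field, S = F[X_1,…,X_k], f ≥ g ≥ 2, and Φ ∈ S_1^{g×f} a matrix of homogeneous linear forms. If Φ is 1-generic, then Φ_H is 1-generic and f_H ≥ f − g. -/

import Mathlib

noncomputable section

namespace Stmt6

open MvPolynomial

variable (F : Type) [Field F]

/-- The space `S_d` of homogeneous polynomials of degree `d` in `S = F[X_1,…,X_k]`. -/
def Sd (k d : ℕ) : Submodule F (MvPolynomial (Fin k) F) :=
  MvPolynomial.homogeneousSubmodule (Fin k) F d

/-- `H = span(X_1, …, X_{k-1}) ⊆ S_1`, the span of the first `k-1` variables. -/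
def Hsub (k : ℕ) : Submodule F (MvPolynomial (Fin k) F) :=
  Submodule.span F ((fun i : Fin k => (MvPolynomial.X i : MvPolynomial (Fin k) F)) ''
    {i | (i : ℕ) < k - 1})

/-- `H^g ⊆ S^g`. -/
def Hpow (k g : ℕ) : Submodule F (Fin g → MvPolynomial (Fin k) F) :=
  Submodule.pi Set.univ (fun _ => Hsub F k)

/-- `V_Φ ⊆ S^g`, the linear span of the columns of `Φ`. -/
def colSpan {k g f : ℕ} (Φ : Matrix (Fin g) (Fin f) (MvPolynomial (Fin k) F)) :
    Submodule F (Fin g → MvPolynomial (Fin k) F) :=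
  Submodule.span F (Set.range fun j : Fin f => fun i : Fin g => Φ i j)

/-- `Φ` is `1`-generic: for all nonzero `a ∈ F̄^g`, `b ∈ F̄^f` (with `F̄` the
algebraic closure of `F`), `a·Φ·bᵀ ≠ 0`. -/
def OneGeneric {k g f : ℕ} (Φ : Matrix (Fin g) (Fin f) (MvPolynomial (Fin k) F)) : Prop :=
  ∀ (a : Fin g → AlgebraicClosure F) (b : Fin f → AlgebraicClosure F), a ≠ 0 → b ≠ 0 →
    (∑ i, ∑ j, MvPolynomial.C (a i) * MvPolynomial.C (b j) *
      MvPolynomial.map (algebraMap F (AlgebraicClosure F)) (Φ i j)) ≠ 0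

/-- A finitely supported function on `ℕ` with total degree `1` is `single i 1`. -/
lemma degree_one_single {σ : Type*} (d : σ →₀ ℕ) (h : d.degree = 1) :
    ∃ i, d = Finsupp.single i 1 := by
  classical
  have hne : d ≠ 0 := by rintro rfl; simp at h
  obtain ⟨i, hi⟩ := Finsupp.support_nonempty_iff.mpr hne
  have hdi : d i = 1 :=
    le_antisymm (h ▸ Finsupp.le_degree i d)
      (Nat.one_le_iff_ne_zero.mpr (Finsupp.mem_support_iff.mp hi))
  refine ⟨i, ?_⟩
  ext j
  rcases eq_or_ne j i with rfl | hj
  · simp [hdi]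
  · rw [Finsupp.single_apply, if_neg (Ne.symm hj)]
    by_contra hdj
    have hjmem : j ∈ d.support := Finsupp.mem_support_iff.mpr hdj
    have hsub : ({i, j} : Finset σ) ⊆ d.support := by
      intro x hx
      rcases Finset.mem_insert.mp hx with rfl | hx
      · exact hi
      · rw [Finset.mem_singleton.mp hx]; exact hjmem
    have h2 : d i + d j ≤ d.degree := by
      rw [Finsupp.degree, ← Finset.sum_pair (Ne.symm hj)]
      exact Finset.sum_le_sum_of_subset hsub
    omega

/-- Homogeneous polynomials of degree one are linear combinations of the variables. -/
lemma homog_one_decomp {k : ℕ} (p : MvPolynomial (Fin k) F)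
    (hp : p ∈ MvPolynomial.homogeneousSubmodule (Fin k) F 1) :
    p = ∑ i : Fin k, MvPolynomial.C (MvPolynomial.coeff (Finsupp.single i 1) p) *
      MvPolynomial.X i := by
  classical
  have hp' : p.IsHomogeneous 1 := (mem_homogeneousSubmodule _ _).mp hp
  apply MvPolynomial.ext
  intro d
  rw [coeff_sum]
  by_cases hd : d.degree = 1
  · obtain ⟨i0, rfl⟩ := degree_one_single d hd
    rw [Finset.sum_eq_single i0]
    · simp [coeff_C_mul]
    · intro j _ hj
      rw [coeff_C_mul, coeff_X', if_neg, mul_zero]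
      exact fun hc => hj ((Finsupp.single_left_inj one_ne_zero).mp hc)
    · exact fun h => absurd (Finset.mem_univ i0) h
  · rw [hp'.coeff_eq_zero hd]
    refine (Finset.sum_eq_zero ?_).symm
    intro j _
    rw [coeff_C_mul, coeff_X', if_neg, mul_zero]
    intro hc
    apply hd
    rw [← hc]
    simp [Finsupp.degree_single]

/-- If `Φ` is `1`-generic, then `Φ_H` is `1`-generic and
`f_H ≥ f − g`. -/
theorem syzygy_distinguisher_stmt6
    (k f g : ℕ) (hfg : g ≤ f) (hg2 : 2 ≤ g)
    (Φ : Matrix (Fin g) (Fin f) (MvPolynomial (Fin k) F))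
    (hΦ1 : ∀ i j, Φ i j ∈ Sd F k 1)
    (hgen : OneGeneric F Φ)
    (fH : ℕ) (hfH : fH = Module.finrank F ↥(colSpan F Φ ⊓ Hpow F k g))
    (ΦH : Matrix (Fin g) (Fin fH) (MvPolynomial (Fin k) F))
    (hΦH : ∀ i j, ΦH i j ∈ Hsub F k)
    (hcols1 : LinearIndependent F (fun j : Fin fH => fun i : Fin g => ΦH i j))
    (hcols2 : Submodule.span F (Set.range fun j : Fin fH => fun i : Fin g => ΦH i j)
      = colSpan F Φ ⊓ Hpow F k g) :
    OneGeneric F ΦH ∧ f - g ≤ fH := by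
  classical
  set K := AlgebraicClosure F with hKdef
  let φ : F →+* K := algebraMap F K
  have hgne : (fun _ : Fin g => (1 : K)) ≠ 0 := by
    intro h
    exact one_ne_zero (congrFun h ⟨0, by omega⟩)
  have hfne : (fun _ : Fin f => (1 : K)) ≠ 0 := by
    intro h
    exact one_ne_zero (congrFun h ⟨0, by omega⟩)
  -- the columns of Φ are linearly independent over F
  have hcolΦ : LinearIndependent F (fun j : Fin f => fun i : Fin g => Φ i j) := by
    rw [Fintype.linearIndependent_iff]
    intro c hc
    by_contra hcon
    push_neg at hcon
    obtain ⟨j0, hj0⟩ := hcon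
    have hb : (fun j => φ (c j)) ≠ 0 := by
      intro h
      apply hj0
      have := congrFun h j0
      exact φ.injective (by simpa using this)
    apply hgen (fun _ => 1) (fun j => φ (c j)) hgne hb
    apply Finset.sum_eq_zero
    intro i _
    have h0 : ∑ j, c j • Φ i j = 0 := by
      have := congrFun hc i
      simpa [Finset.sum_apply] using this
    calc ∑ j, C ((1 : K)) * C (φ (c j)) * MvPolynomial.map φ (Φ i j)
        = MvPolynomial.map φ (∑ j, c j • Φ i j) := by
          rw [map_sum]
          apply Finset.sum_congr rfl
          intro j _
          rw [smul_eq_C_mul, map_mul, MvPolynomial.map_C, map_one, one_mul]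
      _ = 0 := by rw [h0, map_zero]
  -- express columns of ΦH in terms of columns of Φ
  have hmemW : ∀ j : Fin fH, (fun i => ΦH i j) ∈ colSpan F Φ := by
    intro j
    have h : (fun i => ΦH i j) ∈
        Submodule.span F (Set.range fun j : Fin fH => fun i : Fin g => ΦH i j) :=
      Submodule.subset_span ⟨j, rfl⟩
    rw [hcols2] at h
    exact h.1
  have hMex : ∀ j : Fin fH, ∃ c : Fin f → F,
      ∑ t, c t • (fun i : Fin g => Φ i t) = (fun i => ΦH i j) := by
    intro j
    exact (Submodule.mem_span_range_iff_exists_fun F).mp (hmemW j)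
  choose M hMspec using hMex
  have hMentry : ∀ i j, ΦH i j = ∑ t, M j t • Φ i t := by
    intro i j
    have h := congrFun (hMspec j) i
    simp only [Finset.sum_apply, Pi.smul_apply] at h
    exact h.symm
  -- the matrix M has trivial kernel over F
  let Mm : Matrix (Fin f) (Fin fH) F := Matrix.of fun t j => M j t
  have hker : LinearMap.ker Mm.mulVecLin = ⊥ := by
    rw [LinearMap.ker_eq_bot']
    intro c hc
    have h1 : ∑ j, c j • (fun i : Fin g => ΦH i j) = 0 := by
      funext i
      simp only [Finset.sum_apply, Pi.smul_apply, Pi.zero_apply]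
      calc ∑ j, c j • ΦH i j = ∑ j, ∑ t, (M j t * c j) • Φ i t := by
            apply Finset.sum_congr rfl
            intro j _
            rw [hMentry i j, Finset.smul_sum]
            apply Finset.sum_congr rfl
            intro t _
            rw [smul_smul, mul_comm]
        _ = ∑ t, ∑ j, (M j t * c j) • Φ i t := Finset.sum_comm
        _ = ∑ t, (∑ j, M j t * c j) • Φ i t := by
            apply Finset.sum_congr rfl
            intro t _
            rw [← Finset.sum_smul]
        _ = 0 := by
            apply Finset.sum_eq_zero
            intro t _
            have : (Mm.mulVecLin c) t = 0 := by rw [hc]; rfl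
            have h2 : ∑ j, M j t * c j = 0 := by
              simpa [Mm, Matrix.mulVecLin_apply, Matrix.mulVec, dotProduct] using this
            rw [h2, zero_smul]
    have := Fintype.linearIndependent_iff.mp hcols1 c h1
    funext j
    exact this j
  obtain ⟨N, hN⟩ := Mm.mulVecLin.exists_leftInverse_of_injective hker
  have hNM : (LinearMap.toMatrix' N) * Mm = 1 := by
    have h := congrArg LinearMap.toMatrix' hN
    rwa [LinearMap.toMatrix'_comp, ← Matrix.toLin'_apply', LinearMap.toMatrix'_toLin',
      LinearMap.toMatrix'_id] at h
  have hbc : ∀ b : Fin fH → K, Matrix.mulVec (Mm.map φ) b = 0 → b = 0 := by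
    intro b hb
    have h1 : ((LinearMap.toMatrix' N).map φ) * (Mm.map φ) = 1 := by
      rw [← Matrix.map_mul, hNM]
      exact Matrix.map_one φ (map_zero φ) (map_one φ)
    calc b = Matrix.mulVec (1 : Matrix (Fin fH) (Fin fH) K) b := (Matrix.one_mulVec b).symm
      _ = Matrix.mulVec (((LinearMap.toMatrix' N).map φ) * (Mm.map φ)) b := by rw [h1]
      _ = Matrix.mulVec ((LinearMap.toMatrix' N).map φ) (Matrix.mulVec (Mm.map φ) b) := by
          rw [Matrix.mulVec_mulVec]
      _ = 0 := by rw [hb, Matrix.mulVec_zero]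
  -- Part 1 : ΦH is 1-generic
  have part1 : OneGeneric F ΦH := by
    intro a b ha hb
    set b' : Fin f → K := fun t => ∑ j, φ (M j t) * b j with hb'def
    have hb' : b' ≠ 0 := by
      intro h
      apply hb
      apply hbc
      funext t
      have := congrFun h t
      simpa [Matrix.mulVec, dotProduct, Mm, Matrix.map_apply, hb'def] using this
    have key : (∑ i, ∑ j, C (a i) * C (b j) * MvPolynomial.map φ (ΦH i j))
        = ∑ i, ∑ t, C (a i) * C (b' t) * MvPolynomial.map φ (Φ i t) := by
      apply Finset.sum_congr rfl
      intro i _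
      have hmapH : ∀ j, MvPolynomial.map φ (ΦH i j)
          = ∑ t, C (φ (M j t)) * MvPolynomial.map φ (Φ i t) := by
        intro j
        rw [hMentry i j, map_sum]
        apply Finset.sum_congr rfl
        intro t _
        rw [smul_eq_C_mul, map_mul, MvPolynomial.map_C]
      calc ∑ j, C (a i) * C (b j) * MvPolynomial.map φ (ΦH i j)
          = ∑ j, ∑ t, C (a i) * C (b j) * (C (φ (M j t)) * MvPolynomial.map φ (Φ i t)) := by
            apply Finset.sum_congr rfl
            intro j _
            rw [hmapH j, Finset.mul_sum]
        _ = ∑ t, ∑ j, C (a i) * C (b j) * (C (φ (M j t)) * MvPolynomial.map φ (Φ i t)) :=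
            Finset.sum_comm
        _ = ∑ t, C (a i) * C (b' t) * MvPolynomial.map φ (Φ i t) := by
            apply Finset.sum_congr rfl
            intro t _
            have hCb : (C (b' t) : MvPolynomial (Fin k) K)
                = ∑ j, C (φ (M j t)) * C (b j) := by
              rw [hb'def]
              rw [map_sum]
              apply Finset.sum_congr rfl
              intro j _
              rw [map_mul, mul_comm]
            rw [hCb, Finset.mul_sum, Finset.sum_mul]
            apply Finset.sum_congr rfl
            intro j _
            ring
    rw [key]
    exact hgen a b' ha hb'
  refine ⟨part1, ?_⟩
  -- Part 2 : f - g ≤ fH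
  rcases Nat.eq_zero_or_pos k with hk0 | hkpos
  · exfalso
    subst hk0
    have hΦ0 : ∀ i j, Φ i j = 0 := by
      intro i j
      have h := homog_one_decomp F (Φ i j) (hΦ1 i j)
      simpa using h
    apply hgen (fun _ => 1) (fun _ => 1) hgne hfne
    simp [hΦ0]
  · let last : Fin k := ⟨k - 1, by omega⟩
    let lc : MvPolynomial (Fin k) F →ₗ[F] F := lcoeff F (Finsupp.single last 1)
    let L : (Fin g → MvPolynomial (Fin k) F) →ₗ[F] (Fin g → F) :=
      LinearMap.pi fun i => lc.comp (LinearMap.proj i)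
    haveI hWfd : FiniteDimensional F (colSpan F Φ) :=
      FiniteDimensional.span_of_finite F (Set.finite_range _)
    have hWrank : Module.finrank F (colSpan F Φ) = f := by
      rw [colSpan, finrank_span_eq_card hcolΦ, Fintype.card_fin]
    have hW1 : ∀ v ∈ colSpan F Φ, ∀ i,
        v i ∈ MvPolynomial.homogeneousSubmodule (Fin k) F 1 := by
      intro v hv
      have hle : colSpan F Φ ≤
          Submodule.pi Set.univ (fun _ : Fin g => Sd F k 1) := by
        rw [colSpan, Submodule.span_le]
        rintro x ⟨j, rfl⟩
        intro i _
        exact hΦ1 i j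
      intro i
      exact hle hv i (Set.mem_univ i)
    have hLker : ∀ v ∈ colSpan F Φ, (L v = 0 ↔ v ∈ Hpow F k g) := by
      intro v hv
      constructor
      · intro h0
        intro i _
        have hcoeff : MvPolynomial.coeff (Finsupp.single last 1) (v i) = 0 :=
          congrFun h0 i
        have hdec := homog_one_decomp F (v i) (hW1 v hv i)
        rw [hdec]
        apply Submodule.sum_mem
        intro j _
        rcases eq_or_ne j last with rfl | hj
        · rw [hcoeff]
          simp
        · have hjne : (j : ℕ) ≠ k - 1 := by
            intro hc
            exact hj (Fin.ext hc)
          have hjlt : (j : ℕ) < k - 1 := by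
            have := j.isLt
            omega
          have hX : (X j : MvPolynomial (Fin k) F) ∈ Hsub F k :=
            Submodule.subset_span ⟨j, hjlt, rfl⟩
          rw [show (C (MvPolynomial.coeff (Finsupp.single j 1) (v i)) * X j :
              MvPolynomial (Fin k) F)
              = MvPolynomial.coeff (Finsupp.single j 1) (v i) • X j from
            (smul_eq_C_mul _ _).symm]
          exact Submodule.smul_mem _ _ hX
      · intro hvH
        funext i
        have hmem : v i ∈ Hsub F k := hvH i (Set.mem_univ i)
        have hle : Hsub F k ≤ LinearMap.ker lc := by
          rw [Hsub, Submodule.span_le]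
          rintro x ⟨j, hjlt, rfl⟩
          simp only [Set.mem_setOf_eq] at hjlt
          simp only [SetLike.mem_coe, LinearMap.mem_ker]
          show MvPolynomial.coeff (Finsupp.single last 1) (X j : MvPolynomial (Fin k) F) = 0
          rw [coeff_X', if_neg]
          intro hc
          have hje : j = last := (Finsupp.single_left_inj one_ne_zero).mp hc
          rw [hje] at hjlt
          have hlv : (last : ℕ) = k - 1 := rfl
          omega
        exact hle hmem
    let Lres := L.domRestrict (colSpan F Φ)
    have hkerres : LinearMap.ker Lres
        = Submodule.comap (colSpan F Φ).subtype (colSpan F Φ ⊓ Hpow F k g) := by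
      ext x
      simp only [LinearMap.mem_ker, Submodule.mem_comap, Submodule.mem_inf,
        Submodule.coe_subtype, Lres, LinearMap.domRestrict_apply]
      constructor
      · intro h
        exact ⟨x.2, (hLker x.1 x.2).mp h⟩
      · intro h
        exact (hLker x.1 x.2).mpr h.2
    have h1 : Module.finrank F (LinearMap.ker Lres) = fH := by
      rw [hkerres, hfH]
      exact (Submodule.comapSubtypeEquivOfLe inf_le_left).finrank_eq
    have h2 := Lres.finrank_range_add_finrank_ker
    have h3 : Module.finrank F (LinearMap.range Lres) ≤ g := by
      calc Module.finrank F (LinearMap.range Lres) ≤ Module.finrank F (Fin g → F) :=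
            Submodule.finrank_le _
        _ = g := Module.finrank_fin_fun F
    rw [hWrank, h1] at h2
    omega

end Stmt6
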